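/- Let K be a nondegenerate triangle in ℝ² with vertices x₁, x₂, x₃ and let c₁, c₂, c₃ ∈ ℝ. Then there exists a unique pair (a, b) ∈ ℝ × ℝ² such that the Raviart–Thomas field p(x) = a x + b has flux c_i across the edge e_i of K for i = 1, 2, 3 (each edge being given a fixed orientation). -/

import Mathlib

open MeasureTheory

noncomputable section

abbrev E2 : Type := EuclideanSpace ℝ (Fin 2)

/-- The point (a, b) in the Euclidean plane. -/
def pt (a b : ℝ) : E2 := WithLp.toLp 2 ![a, b]

/-- First standard basis vector. -/
def vex : E2 := pt 1 0
/-- Second standard basis vector. -/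
def vey : E2 := pt 0 1

/-- Euclidean dot product on the plane. -/
def dot2 (v w : E2) : ℝ := v 0 * w 0 + v 1 * w 1

/-- rot (w₁, w₂) = (w₂, −w₁). -/
def rot (w : E2) : E2 := pt (w 1) (-(w 0))

/-- Flux of a vector field across the (oriented) segment from `a` to `b`:
∫₀¹ q(a + t(b − a)) · rot(b − a) dt, the line integral of the normal component. -/
def flux (q : E2 → E2) (a b : E2) : ℝ :=
  ∫ t in (0:ℝ)..1, dot2 (q (a + t • (b - a))) (rot (b - a))

/-- Squared Euclidean norm of the gradient of a scalar function. -/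
def gradSq (v : E2 → ℝ) (x : E2) : ℝ :=
  (fderiv ℝ v x vex) ^ 2 + (fderiv ℝ v x vey) ^ 2

/-- Gradient vector of a scalar function. -/
def gradVec (v : E2 → ℝ) (x : E2) : E2 :=
  pt (fderiv ℝ v x vex) (fderiv ℝ v x vey)

/-- Squared Frobenius norm of the Jacobian of a vector field
(sum of squares of the four first-order partial derivatives). -/
def frobSq (q : E2 → E2) (x : E2) : ℝ :=
  (fderiv ℝ q x vex 0) ^ 2 + (fderiv ℝ q x vey 0) ^ 2 +
  (fderiv ℝ q x vex 1) ^ 2 + (fderiv ℝ q x vey 1) ^ 2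

/-- Divergence of a planar vector field. -/
def divg (q : E2 → E2) (x : E2) : ℝ := fderiv ℝ q x vex 0 + fderiv ℝ q x vey 1

/-- The reference triangle with vertices (0,0), (1,0), (0,1). -/
def Khat : Set E2 := convexHull ℝ {pt 0 0, pt 1 0, pt 0 1}

/-- The triangle with vertices (0,0), (α,0), (0,β). -/
def Kab (a b : ℝ) : Set E2 := convexHull ℝ {pt 0 0, pt a 0, pt 0 b}

/-- Matrix–vector multiplication for 2×2 matrices acting on the plane. -/
def matVec (A : Matrix (Fin 2) (Fin 2) ℝ) (x : E2) : E2 :=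
  pt (A 0 0 * x 0 + A 0 1 * x 1) (A 1 0 * x 0 + A 1 1 * x 1)

/-- Squared Frobenius norm of a 2×2 matrix. -/
def mFrobSq (M : Matrix (Fin 2) (Fin 2) ℝ) : ℝ :=
  M 0 0 ^ 2 + M 0 1 ^ 2 + M 1 0 ^ 2 + M 1 1 ^ 2


lemma flux_eq (a : ℝ) (b u v : E2) :
    flux (fun x => a • x + b) u v =
      a * (u 0 * v 1 - u 1 * v 0) + b 0 * (v 1 - u 1) - b 1 * (v 0 - u 0) := by
  have h : (fun t : ℝ => dot2 ((fun x => a • x + b) (u + t • (v - u))) (rot (v - u)))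
      = fun _ => a * (u 0 * v 1 - u 1 * v 0) + b 0 * (v 1 - u 1) - b 1 * (v 0 - u 0) := by
    funext t
    simp [dot2, rot, pt, PiLp.add_apply, PiLp.smul_apply, PiLp.sub_apply, smul_eq_mul]
    ring
  rw [flux, h]
  simp

lemma det_ne (x₁ x₂ x₃ : E2) (hK : AffineIndependent ℝ ![x₁, x₂, x₃]) :
    (x₂ 0 - x₁ 0) * (x₃ 1 - x₁ 1) - (x₂ 1 - x₁ 1) * (x₃ 0 - x₁ 0) ≠ 0 := by
  intro hD
  rw [affineIndependent_iff] at hK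
  obtain ⟨α, β, hne, h0, h1⟩ :
      ∃ α β : ℝ, ¬(α = 0 ∧ β = 0) ∧
        α * (x₂ 0 - x₁ 0) + β * (x₃ 0 - x₁ 0) = 0 ∧
        α * (x₂ 1 - x₁ 1) + β * (x₃ 1 - x₁ 1) = 0 := by
    by_cases h : x₂ 0 - x₁ 0 = 0 ∧ x₃ 0 - x₁ 0 = 0
    · by_cases h' : x₂ 1 - x₁ 1 = 0 ∧ x₃ 1 - x₁ 1 = 0
      · exact ⟨1, 0, by simp, by simp [h.1, h.2], by simp [h'.1, h'.2]⟩
      · refine ⟨x₃ 1 - x₁ 1, -(x₂ 1 - x₁ 1), ?_, by simp [h.1, h.2], by ring⟩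
        rintro ⟨h1, h2⟩; exact h' ⟨by linarith [neg_eq_zero.mp h2], h1⟩
    · refine ⟨x₃ 0 - x₁ 0, -(x₂ 0 - x₁ 0), ?_, by ring, by nlinarith [hD]⟩
      rintro ⟨h1, h2⟩; exact h ⟨by linarith [neg_eq_zero.mp h2], h1⟩
  have := hK Finset.univ ![-(α + β), α, β] (by
      simp [Fin.sum_univ_three]) (by
      show ∑ i ∈ Finset.univ, (![-(α + β), α, β]) i • (![x₁, x₂, x₃]) i = 0
      rw [Fin.sum_univ_three]
      simp only [Matrix.cons_val_zero, Matrix.cons_val_one, Matrix.head_cons,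
        Matrix.cons_val_two, Matrix.tail_cons]
      ext i
      fin_cases i
      · show (-(α + β) • x₁ + α • x₂ + β • x₃) 0 = (0 : E2) 0
        simp only [PiLp.add_apply, PiLp.smul_apply, PiLp.zero_apply, smul_eq_mul]
        linear_combination h0
      · show (-(α + β) • x₁ + α • x₂ + β • x₃) 1 = (0 : E2) 1
        simp only [PiLp.add_apply, PiLp.smul_apply, PiLp.zero_apply, smul_eq_mul]
        linear_combination h1)
  apply hne
  constructor
  · have := this 1 (Finset.mem_univ _); simpa using this
  · have := this 2 (Finset.mem_univ _); simpa using this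

def DD (x₁ x₂ x₃ : E2) : ℝ :=
  (x₂ 0 - x₁ 0) * (x₃ 1 - x₁ 1) - (x₂ 1 - x₁ 1) * (x₃ 0 - x₁ 0)
def AA (x₁ x₂ x₃ : E2) (c₁ c₂ c₃ : ℝ) : ℝ := (c₁ + c₂ + c₃) / DD x₁ x₂ x₃
def DD1 (x₁ x₂ x₃ : E2) (c₁ c₂ c₃ : ℝ) : ℝ :=
  c₁ - AA x₁ x₂ x₃ c₁ c₂ c₃ * (x₂ 0 * x₃ 1 - x₂ 1 * x₃ 0)
def DD3 (x₁ x₂ x₃ : E2) (c₁ c₂ c₃ : ℝ) : ℝ :=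
  c₃ - AA x₁ x₂ x₃ c₁ c₂ c₃ * (x₁ 0 * x₂ 1 - x₁ 1 * x₂ 0)
def BB0 (x₁ x₂ x₃ : E2) (c₁ c₂ c₃ : ℝ) : ℝ :=
  (DD1 x₁ x₂ x₃ c₁ c₂ c₃ * (x₂ 0 - x₁ 0) - DD3 x₁ x₂ x₃ c₁ c₂ c₃ * (x₃ 0 - x₂ 0)) / DD x₁ x₂ x₃
def BB1 (x₁ x₂ x₃ : E2) (c₁ c₂ c₃ : ℝ) : ℝ :=
  ((x₂ 1 - x₁ 1) * DD1 x₁ x₂ x₃ c₁ c₂ c₃ - (x₃ 1 - x₂ 1) * DD3 x₁ x₂ x₃ c₁ c₂ c₃) / DD x₁ x₂ x₃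

/-- Unisolvence of the lowest-order Raviart–Thomas element: for any prescribed
fluxes `c₁, c₂, c₃` across the (oriented) edges of a nondegenerate triangle there
is a unique field `p(x) = a x + b` realizing them. -/
theorem stmt4 (x₁ x₂ x₃ : E2) (hK : AffineIndependent ℝ ![x₁, x₂, x₃])
    (c₁ c₂ c₃ : ℝ) :
    ∃! ab : ℝ × E2,
      flux (fun x => ab.1 • x + ab.2) x₂ x₃ = c₁ ∧
      flux (fun x => ab.1 • x + ab.2) x₃ x₁ = c₂ ∧
      flux (fun x => ab.1 • x + ab.2) x₁ x₂ = c₃ := by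
  have hD := det_ne x₁ x₂ x₃ hK
  refine ⟨(AA x₁ x₂ x₃ c₁ c₂ c₃, pt (BB0 x₁ x₂ x₃ c₁ c₂ c₃) (BB1 x₁ x₂ x₃ c₁ c₂ c₃)),
    ⟨?_, ?_, ?_⟩, ?_⟩
  · rw [flux_eq]
    simp only [pt, PiLp.toLp_apply, Matrix.cons_val_zero, Matrix.cons_val_one, Matrix.head_cons,
      BB0, BB1, DD1, DD3, AA, DD]
    field_simp
    ring
  · rw [flux_eq]
    simp only [pt, PiLp.toLp_apply, Matrix.cons_val_zero, Matrix.cons_val_one, Matrix.head_cons,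
      BB0, BB1, DD1, DD3, AA, DD]
    field_simp
    ring
  · rw [flux_eq]
    simp only [pt, PiLp.toLp_apply, Matrix.cons_val_zero, Matrix.cons_val_one, Matrix.head_cons,
      BB0, BB1, DD1, DD3, AA, DD]
    field_simp
    ring
  · rintro ⟨a, b⟩ ⟨h1, h2, h3⟩
    rw [flux_eq] at h1 h2 h3
    have hDD : DD x₁ x₂ x₃ ≠ 0 := hD
    have ha : a = AA x₁ x₂ x₃ c₁ c₂ c₃ := by
      rw [AA, eq_div_iff hDD, DD]
      linear_combination h1 + h2 + h3
    have hb0 : b 0 = BB0 x₁ x₂ x₃ c₁ c₂ c₃ := by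
      rw [BB0, DD1, DD3, eq_div_iff hDD, DD]
      linear_combination (x₂ 0 - x₁ 0) * h1 - (x₃ 0 - x₂ 0) * h3
        - ((x₂ 0 - x₁ 0) * (x₂ 0 * x₃ 1 - x₂ 1 * x₃ 0)
           - (x₃ 0 - x₂ 0) * (x₁ 0 * x₂ 1 - x₁ 1 * x₂ 0)) * ha
    have hb1 : b 1 = BB1 x₁ x₂ x₃ c₁ c₂ c₃ := by
      rw [BB1, DD1, DD3, eq_div_iff hDD, DD]
      linear_combination (x₂ 1 - x₁ 1) * h1 - (x₃ 1 - x₂ 1) * h3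
        - ((x₂ 1 - x₁ 1) * (x₂ 0 * x₃ 1 - x₂ 1 * x₃ 0)
           - (x₃ 1 - x₂ 1) * (x₁ 0 * x₂ 1 - x₁ 1 * x₂ 0)) * ha
    refine Prod.ext ha ?_
    ext i
    fin_cases i
    · show b 0 = pt (BB0 x₁ x₂ x₃ c₁ c₂ c₃) (BB1 x₁ x₂ x₃ c₁ c₂ c₃) 0
      simpa [pt] using hb0
    · show b 1 = pt (BB0 x₁ x₂ x₃ c₁ c₂ c₃) (BB1 x₁ x₂ x₃ c₁ c₂ c₃) 1
      simpa [pt] using hb1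

end
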